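/- Masked equality is secret-independent equality: for 26-bit values x, y (i.e. x, y < 2^26), the specification of eq_mask — returning 2^26 − 1 if x = y and 0 otherwise — can be computed branch-free as z = NOT(fold of ORs of XOR bits), and in particular z = 2^26 − 1 ↔ x = y and z = 0 ↔ x ≠ y; furthermore for any w < 2^26, (w AND z) = w when x = y and (w AND z) = 0 when x ≠ y. -/

import Mathlib

/-! STATEMENT 16: Masked equality is secret-independent equality. -/

private lemma fold_or_toNat (f : ℕ → Bool) (l : List ℕ) :
    l.foldr (fun i acc => (f i).toNat ||| acc) 0 = (l.any f).toNat := by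
  induction l with
  | nil => simp
  | cons a t ih =>
      simp [ih]
      cases f a <;> cases t.any f <;> simp

theorem eq_mask_spec (x y : ℕ) (hx : x < 2 ^ 26) (hy : y < 2 ^ 26) :
    -- branch-free: z = NOT (fold of ORs of the XOR bits)
    let z : ℕ := (2 ^ 26 - 1) *
      (1 - (List.range 26).foldr
        (fun i acc => (Nat.testBit (x ^^^ y) i).toNat ||| acc) 0)
    (z = 2 ^ 26 - 1 ↔ x = y) ∧
    (z = 0 ↔ x ≠ y) ∧
    ∀ w : ℕ, w < 2 ^ 26 →
      (x = y → w &&& z = w) ∧ (x ≠ y → w &&& z = 0) := by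
  intro z
  have hxor : x ^^^ y < 2 ^ 26 := Nat.xor_lt_two_pow hx hy
  have hany : (List.range 26).any (fun i => Nat.testBit (x ^^^ y) i) = decide (x ≠ y) := by
    by_cases h : x = y
    · subst h
      simp
    · simp only [h, decide_not, decide_eq_true_eq, ne_eq, not_false_iff, decide_true]
      rw [List.any_eq_true]
      by_contra hc
      push_neg at hc
      apply h
      have hz : x ^^^ y = 0 := by
        apply Nat.eq_of_testBit_eq
        intro i
        simp only [Nat.zero_testBit]
        by_cases hi : i < 26
        · have := hc i (List.mem_range.mpr hi)
          simpa using this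
        · exact Nat.testBit_lt_two_pow (lt_of_lt_of_le hxor (Nat.pow_le_pow_right (by norm_num) (by omega)))
      exact xor_eq_zero_iff.mp hz
  have hz : z = (2 ^ 26 - 1) * (1 - (decide (x ≠ y)).toNat) := by
    simp only [z, fold_or_toNat, hany]
  by_cases h : x = y
  · have hz' : z = 2 ^ 26 - 1 := by simp [hz, h]
    refine ⟨by simp [hz', h], by simp [hz']; omega, ?_⟩
    intro w hw
    refine ⟨fun _ => ?_, fun hne => absurd h hne⟩
    rw [hz', Nat.and_two_pow_sub_one_of_lt_two_pow hw]
  · have hz' : z = 0 := by simp [hz, h]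
    refine ⟨by simp [hz']; omega, by simp [hz', h], ?_⟩
    intro w hw
    exact ⟨fun he => absurd he h, fun _ => by simp [hz']⟩
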